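/- Let Γ be a finite group acting on a commutative ring A by ring automorphisms, with |Γ| invertible in A. Let 𝔪 ⊆ A be an ideal with 𝔪² = 0, stable under Γ. If B is a Γ-equivariant A-algebra and φ₀: B → A/𝔪 is a Γ-equivariant A-algebra homomorphism which admits some (not necessarily equivariant) A-algebra lift φ: B → A, then φ₀ admits a Γ-equivariant lift φ₁: B → A. -/
import Mathlib


/-- Equivariant infinitesimal lifting (key step of Lemma `lem:reduced`):
if `Γ` acts on `A` and on the `A`-algebra `B` compatibly, `𝔪` is a `Γ`-stable
square-zero ideal, `|Γ|` is invertible in `A`, and the `A`-algebra map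
`φ : B → A` is a lift of a `Γ`-equivariant map `B → A/𝔪` (i.e. `φ` is
equivariant modulo `𝔪`), then there is a genuinely `Γ`-equivariant `A`-algebra
lift `φ₁` of the same map `B → A/𝔪`. -/
theorem equivariant_lift_of_square_zero {Γ : Type*} [Group Γ] [Fintype Γ]
    {A B : Type*} [CommRing A] [CommRing B] [Algebra A B]
    [MulSemiringAction Γ A] [MulSemiringAction Γ B]
    (hcompat : ∀ (γ : Γ) (a : A), γ • (algebraMap A B a) = algebraMap A B (γ • a))
    (hunit : IsUnit ((Fintype.card Γ : ℕ) : A))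
    (𝔪 : Ideal A) (hsq : 𝔪 * 𝔪 = ⊥)
    (hstab : ∀ (γ : Γ), ∀ a ∈ 𝔪, γ • a ∈ 𝔪)
    (φ : B →+* A) (hφA : ∀ a : A, φ (algebraMap A B a) = a)
    (hφeq : ∀ (γ : Γ) (b : B), φ (γ • b) - γ • φ b ∈ 𝔪) :
    ∃ φ₁ : B →+* A,
      (∀ a : A, φ₁ (algebraMap A B a) = a) ∧
      (∀ b : B, φ₁ b - φ b ∈ 𝔪) ∧
      (∀ (γ : Γ) (b : B), φ₁ (γ • b) = γ • φ₁ b) := by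
  classical
  set N : A := ((Fintype.card Γ : ℕ) : A) with hN
  set c : A := ↑hunit.unit⁻¹ with hc
  have hcN : c * N = 1 := by
    simpa [hc] using hunit.val_inv_mul
  have hNsmul : ∀ γ : Γ, γ • N = N := by
    intro γ
    show γ • ((Fintype.card Γ : ℕ) : A) = _
    exact map_natCast (MulSemiringAction.toRingHom Γ A γ) _
  have hcsmul : ∀ γ : Γ, γ • c = c := by
    intro γ
    have h1 : (γ • c) * N = 1 := by
      rw [← hNsmul γ, ← smul_mul', hcN, smul_one]
    calc γ • c = (γ • c) * (N * c) := by rw [mul_comm N c, hcN, mul_one]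
      _ = ((γ • c) * N) * c := by ring
      _ = c := by rw [h1, one_mul]
  -- the derivation-type differences
  set d : Γ → B → A := fun γ b => γ⁻¹ • φ (γ • b) - φ b with hd
  have hd_mem : ∀ γ b, d γ b ∈ 𝔪 := by
    intro γ b
    have : d γ b = γ⁻¹ • (φ (γ • b) - γ • φ b) := by
      rw [hd]; simp [smul_sub, inv_smul_smul]
    rw [this]
    exact hstab _ _ (hφeq γ b)
  have hd_term : ∀ γ (b : B), γ⁻¹ • φ (γ • b) = φ b + d γ b := by
    intro γ b; rw [hd]; ring
  have hmm : ∀ x ∈ 𝔪, ∀ y ∈ 𝔪, x * y = 0 := by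
    intro x hx y hy
    have : x * y ∈ 𝔪 * 𝔪 := Ideal.mul_mem_mul hx hy
    rw [hsq] at this
    exact Ideal.mem_bot.mp this
  have hd_mul : ∀ γ (x y : B), d γ (x * y) = φ x * d γ y + φ y * d γ x := by
    intro γ x y
    have h1 : γ⁻¹ • φ (γ • (x * y)) = (γ⁻¹ • φ (γ • x)) * (γ⁻¹ • φ (γ • y)) := by
      rw [smul_mul', map_mul, smul_mul']
    have h2 : d γ x * d γ y = 0 := hmm _ (hd_mem γ x) _ (hd_mem γ y)
    have := h1
    rw [hd_term, hd_term, hd_term] at this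
    have : φ (x * y) + d γ (x * y) = (φ x + d γ x) * (φ y + d γ y) := this
    rw [map_mul] at this
    linear_combination this + h2
  set D : B → A := fun b => c * ∑ γ : Γ, d γ b with hD
  have hD_mem : ∀ b, D b ∈ 𝔪 := by
    intro b
    exact Ideal.mul_mem_left _ _ (Ideal.sum_mem _ fun γ _ => hd_mem γ b)
  have hD_mul : ∀ x y, D (x * y) = φ x * D y + φ y * D x := by
    intro x y
    rw [hD]
    simp only
    rw [Finset.sum_congr rfl (fun γ _ => hd_mul γ x y), Finset.sum_add_distrib,
      ← Finset.mul_sum, ← Finset.mul_sum]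
    ring
  set f : B → A := fun b => φ b + D b with hf
  have hf_sum : ∀ b, f b = c * ∑ γ : Γ, γ⁻¹ • φ (γ • b) := by
    intro b
    show φ b + c * ∑ γ : Γ, d γ b = _
    rw [Finset.sum_congr rfl (fun γ _ => hd_term γ b), Finset.sum_add_distrib,
      Finset.sum_const, Finset.card_univ, nsmul_eq_mul]
    have hNdef : ((Fintype.card Γ : ℕ) : A) = N := rfl
    rw [hNdef]
    linear_combination (- φ b) * hcN
  have hf_one : f 1 = 1 := by
    have hD1 : D 1 = 0 := by
      have h := hD_mul 1 1
      rw [mul_one, map_one, one_mul] at h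
      linear_combination -h
    show φ 1 + D 1 = 1
    rw [hD1, map_one, add_zero]
  have hf_mul : ∀ x y, f (x * y) = f x * f y := by
    intro x y
    show φ (x * y) + D (x * y) = (φ x + D x) * (φ y + D y)
    rw [map_mul, hD_mul]
    have h0 : D x * D y = 0 := hmm _ (hD_mem x) _ (hD_mem y)
    linear_combination -h0
  have hf_add : ∀ x y, f (x + y) = f x + f y := by
    intro x y
    rw [hf_sum, hf_sum, hf_sum]
    simp only [smul_add, map_add]
    rw [← mul_add, ← Finset.sum_add_distrib]
  have hf_zero : f 0 = 0 := by
    have := hf_add 0 0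
    rw [add_zero] at this
    linear_combination -this
  refine ⟨⟨⟨⟨f, hf_one⟩, hf_mul⟩, hf_zero, hf_add⟩, ?_, ?_, ?_⟩
  · intro a
    show f (algebraMap A B a) = a
    rw [hf_sum]
    have : ∀ γ : Γ, γ⁻¹ • φ (γ • algebraMap A B a) = a := by
      intro γ
      rw [hcompat, hφA, inv_smul_smul]
    rw [Finset.sum_congr rfl (fun γ _ => this γ), Finset.sum_const, Finset.card_univ,
      nsmul_eq_mul, ← mul_assoc, ← hN, hcN, one_mul]
  · intro b
    show (φ b + D b) - φ b ∈ 𝔪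
    simpa using hD_mem b
  · intro δ b
    show f (δ • b) = δ • f b
    rw [hf_sum, hf_sum]
    rw [smul_mul', hcsmul, Finset.smul_sum]
    congr 1
    rw [← Equiv.sum_comp (Equiv.mulRight δ) (fun σ => δ • (σ⁻¹ • φ (σ • b)))]
    apply Finset.sum_congr rfl
    intro γ _
    simp only [Equiv.coe_mulRight]
    rw [smul_smul, smul_smul, mul_inv_rev, mul_inv_cancel_left]
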